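/- Let $D \colon \mathcal{O}_2[T_1, T_2] \to \mathcal{O}_2[T_1, T_2]$ be defined on $h = \sum_{k_1,k_2} h_{k_1,k_2} T_1^{k_1} T_2^{k_2}$ (with $h_{k_1,k_2}$ germs of holomorphic functions in $(x_1,x_2)$ at the origin) by $D(h) = \sum_{k_1,k_2} \big( x_1 \partial_{x_1} h_{k_1,k_2} - x_2 \partial_{x_2} h_{k_1,k_2} + (k_1+1) h_{k_1+1,k_2} - (k_2+1) h_{k_1,k_2+1} \big) T_1^{k_1} T_2^{k_2}$. If $D(h) = 0$, then there exist germs $h_k$ such that $h_{k_1,k_2} = \binom{k_1+k_2}{k_1} h_{k_1+k_2}$, and each $h_k$, expanded as a power series $\sum_{l_1,l_2} a_{k,l_1,l_2} x_1^{l_1} x_2^{l_2}$, satisfies $a_{k,l_1,l_2} = 0$ unless $l_1 = l_2$. -/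

import Mathlib

open Filter

open Metric Complex

set_option maxHeartbeats 1000000 in

lemma core_lemma {u : ℂ × ℂ → ℂ} {v : ℂ → ℂ} (hu : AnalyticAt ℂ u 0)
    (heq : (fun z : ℂ × ℂ => z.1 * deriv (fun w => u (w, z.2)) z.1
        - z.2 * deriv (fun w => u (z.1, w)) z.2) =ᶠ[nhds (0 : ℂ × ℂ)]
        fun z => v (z.1 * z.2)) :
    (v =ᶠ[nhds (0 : ℂ)] fun _ => 0) ∧ ∃ g : ℂ → ℂ, AnalyticAt ℂ g 0 ∧
      u =ᶠ[nhds (0 : ℂ × ℂ)] fun z => g (z.1 * z.2) := by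
  obtain ⟨r, hrpos, hr⟩ := Metric.eventually_nhds_iff_ball.1 (hu.eventually_analyticAt.and heq)
  have hball : ∀ w : ℂ × ℂ, w ∈ ball (0 : ℂ × ℂ) r ↔ ‖w.1‖ < r ∧ ‖w.2‖ < r := by
    intro w; simp [mem_ball, dist_zero_right, Prod.norm_def, max_lt_iff]
  -- key derivative computation
  have key : ∀ z : ℂ × ℂ, ∀ τ : ℂ, (exp τ * z.1, exp (-τ) * z.2) ∈ ball (0 : ℂ × ℂ) r →
      HasDerivAt (fun σ => u (exp σ * z.1, exp (-σ) * z.2)) (v (z.1 * z.2)) τ := by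
    intro z τ hw
    set w : ℂ × ℂ := (exp τ * z.1, exp (-τ) * z.2) with hwdef
    obtain ⟨han, heqw⟩ := hr w hw
    have hdiff : DifferentiableAt ℂ u w := han.differentiableAt
    set L := fderiv ℂ u w with hL
    have hFD : HasFDerivAt u L w := hdiff.hasFDerivAt
    have hs1 : HasDerivAt (fun a => u (a, w.2)) (L (1, 0)) w.1 := by
      have h1 : HasDerivAt (fun a : ℂ => (a, w.2)) ((1 : ℂ), (0 : ℂ)) w.1 :=
        (hasDerivAt_id w.1).prodMk (hasDerivAt_const w.1 w.2)
      have := hFD.comp_hasDerivAt w.1 (by simpa using h1)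
      exact this
    have hs2 : HasDerivAt (fun b => u (w.1, b)) (L (0, 1)) w.2 := by
      have h1 : HasDerivAt (fun b : ℂ => (w.1, b)) ((0 : ℂ), (1 : ℂ)) w.2 :=
        (hasDerivAt_const w.2 w.1).prodMk (hasDerivAt_id w.2)
      have := hFD.comp_hasDerivAt w.2 (by simpa using h1)
      exact this
    have hγ : HasDerivAt (fun σ : ℂ => (exp σ * z.1, exp (-σ) * z.2))
        ((exp τ * z.1, -(exp (-τ) * z.2))) τ := by
      have h1 : HasDerivAt (fun σ : ℂ => exp σ * z.1) (exp τ * z.1) τ :=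
        (Complex.hasDerivAt_exp τ).mul_const z.1
      have h2 : HasDerivAt (fun σ : ℂ => exp (-σ) * z.2) (-(exp (-τ) * z.2)) τ := by
        have : HasDerivAt (fun σ : ℂ => exp (-σ) * z.2) (exp (-τ) * -1 * z.2) τ :=
          ((Complex.hasDerivAt_exp (-τ)).comp τ (hasDerivAt_neg τ)).mul_const z.2
        convert this using 1; ring
      exact h1.prodMk h2
    have hcomp := hFD.comp_hasDerivAt τ hγ
    have hLval : L (exp τ * z.1, -(exp (-τ) * z.2)) = v (z.1 * z.2) := by
      have hdecomp : L (exp τ * z.1, -(exp (-τ) * z.2))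
          = (exp τ * z.1) • L (1, 0) + (-(exp (-τ) * z.2)) • L (0, 1) := by
        rw [← map_smul, ← map_smul, ← map_add]
        congr 1
        simp [Prod.ext_iff]
      rw [hdecomp]
      have e1 : deriv (fun a => u (a, w.2)) w.1 = L (1, 0) := hs1.deriv
      have e2 : deriv (fun b => u (w.1, b)) w.2 = L (0, 1) := hs2.deriv
      rw [← e1, ← e2]
      have hprod : w.1 * w.2 = z.1 * z.2 := by
        simp only [hwdef, Complex.exp_neg]
        field_simp [Complex.exp_ne_zero]
      have heqw2 : w.1 * deriv (fun a => u (a, w.2)) w.1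
          - w.2 * deriv (fun b => u (w.1, b)) w.2 = v (w.1 * w.2) := heqw
      rw [← hprod, ← heqw2]
      simp [hwdef]
      ring
    rw [← hLval]
    exact hcomp
  -- constancy along the flow
  have const : ∀ z : ℂ × ℂ, z ∈ ball (0 : ℂ × ℂ) r → ∀ τ : ℂ,
      (exp τ * z.1, exp (-τ) * z.2) ∈ ball (0 : ℂ × ℂ) r →
      u (exp τ * z.1, exp (-τ) * z.2) - τ * v (z.1 * z.2) = u z := by
    intro z hz τ hτ
    set c := v (z.1 * z.2) with hc
    set S : Set ℂ := {σ | (exp σ * z.1, exp (-σ) * z.2) ∈ ball (0 : ℂ × ℂ) r} with hS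
    have hSopen : IsOpen S := by
      have : Continuous fun σ : ℂ => (exp σ * z.1, exp (-σ) * z.2) := by continuity
      exact isOpen_ball.preimage this
    have hmem : ∀ σ : ℂ, σ ∈ S ↔ Real.exp σ.re * ‖z.1‖ < r ∧ Real.exp (-σ.re) * ‖z.2‖ < r := by
      intro σ
      rw [hS, Set.mem_setOf_eq, hball]
      simp [norm_mul, Complex.norm_exp]
    have hconv : Convex ℝ S := by
      have helper : ∀ x y a b cc : ℝ, 0 ≤ a → 0 ≤ b → a + b = 1 → 0 ≤ cc →
          Real.exp x * cc < r → Real.exp y * cc < r → Real.exp (a*x+b*y) * cc < r := by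
        intro x y a b cc ha hb hab hcc hx hy
        rcases le_total x y with h | h
        · have h0 : a*y + b*y = y := by rw [← add_mul, hab, one_mul]
          have h1 : a*x+b*y ≤ y := by linarith [mul_le_mul_of_nonneg_left h ha]
          have h2 : Real.exp (a*x+b*y) ≤ Real.exp y := Real.exp_le_exp.2 h1
          nlinarith [mul_le_mul_of_nonneg_right h2 hcc]
        · have h0 : a*x + b*x = x := by rw [← add_mul, hab, one_mul]
          have h1 : a*x+b*y ≤ x := by linarith [mul_le_mul_of_nonneg_left h hb]
          have h2 : Real.exp (a*x+b*y) ≤ Real.exp x := Real.exp_le_exp.2 h1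
          nlinarith [mul_le_mul_of_nonneg_right h2 hcc]
      intro σ hσ ρ hρ a b ha hb hab
      rw [hmem] at hσ hρ ⊢
      have hre : (a • σ + b • ρ).re = a * σ.re + b * ρ.re := by
        simp [Complex.add_re, Complex.smul_re]
      refine ⟨?_, ?_⟩
      · rw [hre]; exact helper _ _ _ _ _ ha hb hab (norm_nonneg _) hσ.1 hρ.1
      · rw [hre]
        have hneg : -(a * σ.re + b * ρ.re) = a * (-σ.re) + b * (-ρ.re) := by ring
        rw [hneg]
        exact helper _ _ _ _ _ ha hb hab (norm_nonneg _) hσ.2 hρ.2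
    set F : ℂ → ℂ := fun σ => u (exp σ * z.1, exp (-σ) * z.2) - σ * c with hF
    have hFderiv : ∀ σ ∈ S, HasDerivAt F 0 σ := by
      intro σ hσ
      have h1 := key z σ hσ
      have h2 : HasDerivAt (fun σ : ℂ => σ * c) c σ := by
        simpa using (hasDerivAt_id σ).mul_const c
      have := h1.sub h2; rw [← hc, sub_self] at this; exact this
    have h0S : (0 : ℂ) ∈ S := by
      rw [hS, Set.mem_setOf_eq]; simpa using hz
    have hconst := hconv.is_const_of_fderivWithin_eq_zero (f := F)
      (fun σ hσ => ((hFderiv σ hσ).differentiableAt).differentiableWithinAt)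
      (fun σ hσ => by
        rw [fderivWithin_of_isOpen hSopen hσ]
        rw [((hFderiv σ hσ).hasFDerivAt).fderiv]
        exact ContinuousLinearMap.ext fun w => by simp)
      (x := τ) (y := 0) hτ h0S
    have hF0 : F 0 = u z := by simp [hF]
    rw [← hF0]
    exact hconst
  -- v vanishes on products
  have hv0 : ∀ z : ℂ × ℂ, z ∈ ball (0 : ℂ × ℂ) r → v (z.1 * z.2) = 0 := by
    intro z hz
    have h2pi : (exp (2*(Real.pi:ℂ)*I) * z.1, exp (-(2*(Real.pi:ℂ)*I)) * z.2) = z := by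
      rw [Complex.exp_neg, Complex.exp_two_pi_mul_I]
      simp
    have := const z hz (2*(Real.pi:ℂ)*I) (by rw [h2pi]; exact hz)
    rw [h2pi] at this
    have h0 : (2*(Real.pi:ℂ)*I) * v (z.1 * z.2) = 0 := by linear_combination -this
    rcases mul_eq_zero.1 h0 with h | h
    · exact absurd h Complex.two_pi_I_ne_zero
    · exact h
  have hrne : (r : ℂ) ≠ 0 := by exact_mod_cast hrpos.ne'
  constructor
  · -- conclusion (i)
    have goal : ∀ᶠ y in nhds (0 : ℂ), v y = 0 := by
      rw [Metric.eventually_nhds_iff_ball]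
      refine ⟨r * r / 2, by positivity, fun y hy => ?_⟩
      rw [mem_ball, dist_zero_right] at hy
      have hz : ((y * (2 / r), (r : ℂ) / 2) : ℂ × ℂ) ∈ ball (0 : ℂ × ℂ) r := by
        rw [hball]
        constructor
        · simp only [norm_mul]
          rw [show ((2 : ℂ) / r) = ((2 / r : ℝ) : ℂ) by push_cast; ring]
          rw [Complex.norm_real]
          rw [Real.norm_of_nonneg (by positivity)]
          calc ‖y‖ * (2 / r) < (r * r / 2) * (2 / r) := by
                apply mul_lt_mul_of_pos_right hy; positivity
            _ = r := by field_simp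
        · rw [show ((r : ℂ) / 2) = ((r / 2 : ℝ) : ℂ) by push_cast; ring, Complex.norm_real,
            Real.norm_of_nonneg (by positivity)]
          linarith
      have := hv0 _ hz
      have harg : y * (2 / (r:ℂ)) * ((r:ℂ) / 2) = y := by field_simp
      simpa [harg] using this
    exact goal
  · -- conclusion (ii)
    have hc2 : ((0 : ℂ), (r : ℂ) / 2) ∈ ball (0 : ℂ × ℂ) r := by
      rw [hball]
      constructor
      · simpa using hrpos
      · rw [show ((r : ℂ) / 2) = ((r / 2 : ℝ) : ℂ) by push_cast; ring, Complex.norm_real,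
          Real.norm_of_nonneg (by positivity)]
        linarith
    set g : ℂ → ℂ := fun y => u (y * (2 / r), (r : ℂ) / 2) with hg
    have hganal : AnalyticAt ℂ g 0 := by
      have hinner : AnalyticAt ℂ (fun y : ℂ => ((y * (2 / r), (r : ℂ) / 2) : ℂ × ℂ)) 0 :=
        ((analyticAt_id.mul analyticAt_const).prod analyticAt_const)
      have houter : AnalyticAt ℂ u ((0 : ℂ) * (2 / r), (r : ℂ) / 2) := by
        simpa using (hr _ hc2).1
      exact AnalyticAt.comp houter hinner
    have h2r : ((2 : ℂ)/r) ≠ 0 := by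
      apply div_ne_zero
      · norm_num
      · exact hrne
    have hnorm2r : ‖(2 : ℂ)/r‖ = 2/r := by
      rw [show ((2 : ℂ)/r) = ((2/r : ℝ) : ℂ) by push_cast; ring, Complex.norm_real,
        Real.norm_of_nonneg (by positivity)]
    have hnormr2 : ‖(r : ℂ)/2‖ = r/2 := by
      rw [show ((r : ℂ)/2) = ((r/2 : ℝ) : ℂ) by push_cast; ring, Complex.norm_real,
        Real.norm_of_nonneg (by positivity)]
    have main' : ∀ z : ℂ × ℂ, ‖z.1‖ < r/2 → ‖z.2‖ < r/2 → z.2 ≠ 0 → u z = g (z.1 * z.2) := by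
      intro z hz1 hz2 hz2ne
      set τ₀ := Complex.log (z.2 * (2 / r)) with hτ₀
      have hexp : exp τ₀ = z.2 * (2 / r) := Complex.exp_log (mul_ne_zero hz2ne h2r)
      have hflow : (exp τ₀ * z.1, exp (-τ₀) * z.2) = (z.1 * z.2 * (2 / r), (r : ℂ) / 2) := by
        rw [Complex.exp_neg, hexp]
        refine Prod.ext_iff.2 ⟨by ring, ?_⟩
        field_simp
      have hzball : z ∈ ball (0 : ℂ × ℂ) r := by
        rw [hball]; exact ⟨by linarith, by linarith⟩
      have hflowball : (exp τ₀ * z.1, exp (-τ₀) * z.2) ∈ ball (0 : ℂ × ℂ) r := by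
        rw [hflow, hball]
        constructor
        · simp only [norm_mul, hnorm2r]
          have h1 : ‖z.1‖ * ‖z.2‖ < (r/2) * (r/2) := by
            apply mul_lt_mul'' hz1 hz2 (norm_nonneg _) (norm_nonneg _)
          have h2 : (0:ℝ) < 2/r := by positivity
          calc ‖z.1‖ * ‖z.2‖ * (2/r) < ((r/2) * (r/2)) * (2/r) :=
                mul_lt_mul_of_pos_right h1 h2
            _ = r/2 := by field_simp
            _ < r := by linarith
        · rw [hnormr2]; linarith
      have hconst := const z hzball τ₀ hflowball
      rw [hflow, hv0 z hzball] at hconst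
      simp only [mul_zero, sub_zero] at hconst
      rw [← hconst, hg]
    have main : ∀ z : ℂ × ℂ, ‖z.1‖ < r/2 → ‖z.2‖ < r/2 → u z = g (z.1 * z.2) := by
      intro z hz1 hz2
      rcases eq_or_ne z.2 0 with h20 | h20
      · have hcontu : ContinuousAt (fun w : ℂ => u (z.1, w)) 0 := by
          have hz10 : ((z.1, (0:ℂ)) : ℂ × ℂ) ∈ ball (0 : ℂ × ℂ) r := by
            rw [hball]
            exact ⟨by linarith, by simpa using hrpos⟩
          have h1 : ContinuousAt u (z.1, (0:ℂ)) := (hr _ hz10).1.continuousAt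
          exact h1.comp ((continuous_const.prodMk continuous_id).continuousAt)
        have hcontg : ContinuousAt (fun w : ℂ => g (z.1 * w)) 0 := by
          have h1 : ContinuousAt g (z.1 * 0) := by
            rw [mul_zero]; exact hganal.continuousAt
          exact h1.comp ((continuous_const.mul continuous_id).continuousAt)
        have hev : (fun w : ℂ => u (z.1, w)) =ᶠ[nhdsWithin (0:ℂ) {(0:ℂ)}ᶜ]
            fun w => g (z.1 * w) := by
          have hsmall : ∀ᶠ w in nhds (0:ℂ), ‖w‖ < r/2 := by
            filter_upwards [Metric.ball_mem_nhds (0:ℂ) (show (0:ℝ) < r/2 by positivity)] with w hw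
            rwa [mem_ball, dist_zero_right] at hw
          filter_upwards [self_mem_nhdsWithin,
            eventually_nhdsWithin_of_eventually_nhds hsmall] with w hw hwsmall
          exact main' (z.1, w) hz1 hwsmall hw
        have t1 : Filter.Tendsto (fun w : ℂ => u (z.1, w)) (nhdsWithin (0:ℂ) {(0:ℂ)}ᶜ)
            (nhds (u (z.1, 0))) := hcontu.tendsto.mono_left nhdsWithin_le_nhds
        have t2 : Filter.Tendsto (fun w : ℂ => u (z.1, w)) (nhdsWithin (0:ℂ) {(0:ℂ)}ᶜ)
            (nhds (g (z.1 * 0))) :=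
          (hcontg.tendsto.mono_left nhdsWithin_le_nhds).congr' hev.symm
        have huniq := tendsto_nhds_unique t1 t2
        have hzeq : z = (z.1, (0:ℂ)) := Prod.ext_iff.2 ⟨rfl, h20⟩
        rw [hzeq]
        simp only [h20]
        simpa using huniq
      · exact main' z hz1 hz2 h20
    refine ⟨g, hganal, ?_⟩
    have goal : ∀ᶠ z in nhds (0 : ℂ × ℂ), u z = g (z.1 * z.2) := by
      rw [Metric.eventually_nhds_iff_ball]
      refine ⟨r / 2, by positivity, fun z hz => ?_⟩
      rw [mem_ball, dist_zero_right, Prod.norm_def, max_lt_iff] at hz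
      exact main z hz.1 hz.2
    exact goal

/-- Relative log Poincaré lemma for `f(x₁,x₂) = x₁x₂`, kernel computation: if
`h = ∑ h_{k₁,k₂} T₁^{k₁} T₂^{k₂}` (with `T_i = log x_i` and `h_{k₁,k₂}` holomorphic
germs at `0 ∈ ℂ²`) satisfies `D(h) = 0` for the relative logarithmic differential
`D(h) = ∑ (x₁∂₁h_{k₁,k₂} - x₂∂₂h_{k₁,k₂} + (k₁+1)h_{k₁+1,k₂} - (k₂+1)h_{k₁,k₂+1}) T₁^{k₁}T₂^{k₂}`,
then there are germs `h_k` with `h_{k₁,k₂} = C(k₁+k₂,k₁) h_{k₁+k₂}`, and each `h_k`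
has power series supported on the diagonal, i.e. is a holomorphic function of
`y = x₁x₂`. -/
theorem relative_log_poincare_kernel (h : ℕ → ℕ → ℂ × ℂ → ℂ)
    (hfin : ∃ N, ∀ k₁ k₂, N ≤ k₁ ∨ N ≤ k₂ → h k₁ k₂ = 0)
    (han : ∀ k₁ k₂, AnalyticAt ℂ (h k₁ k₂) 0)
    (hD : ∀ k₁ k₂,
      (fun z : ℂ × ℂ =>
          z.1 * deriv (fun w => h k₁ k₂ (w, z.2)) z.1
            - z.2 * deriv (fun w => h k₁ k₂ (z.1, w)) z.2
            + ((k₁ : ℂ) + 1) * h (k₁ + 1) k₂ z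
            - ((k₂ : ℂ) + 1) * h k₁ (k₂ + 1) z)
        =ᶠ[nhds (0 : ℂ × ℂ)] fun _ => 0) :
    ∃ φ : ℕ → ℂ → ℂ,
      (∀ k, AnalyticAt ℂ (φ k) 0) ∧
      (∀ k₁ k₂, h k₁ k₂
        =ᶠ[nhds (0 : ℂ × ℂ)] fun z => ((k₁ + k₂).choose k₁ : ℂ) * φ (k₁ + k₂) (z.1 * z.2)) := by
  obtain ⟨N, hN⟩ := hfin
  suffices H : ∀ d : ℕ, ∃ φ : ℕ → ℂ → ℂ, (∀ k, AnalyticAt ℂ (φ k) 0) ∧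
      ∀ k₁ k₂ : ℕ, 2*N - d ≤ k₁ + k₂ → h k₁ k₂ =ᶠ[nhds (0 : ℂ × ℂ)]
        fun z => ((k₁+k₂).choose k₁ : ℂ) * φ (k₁+k₂) (z.1*z.2) by
    obtain ⟨φ, h1, h2⟩ := H (2*N)
    exact ⟨φ, h1, fun k₁ k₂ => h2 k₁ k₂ (by omega)⟩
  intro d
  induction d with
  | zero =>
      refine ⟨fun _ _ => 0, fun _ => analyticAt_const, fun k₁ k₂ hk => ?_⟩
      have hz : h k₁ k₂ = 0 := hN k₁ k₂ (by omega)
      exact Filter.Eventually.of_forall fun z => by simp [hz]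
  | succ d ih =>
      obtain ⟨φ, hφan, hφ⟩ := ih
      rcases le_or_gt (2*N) d with hd | hd
      · refine ⟨φ, hφan, fun k₁ k₂ hk => hφ k₁ k₂ (by omega)⟩
      obtain ⟨s, hs1, hs2⟩ : ∃ s, 2*N-(d+1) = s ∧ 2*N-d = s+1 := ⟨2*N-(d+1), rfl, by omega⟩
      rw [hs2] at hφ
      rw [hs1]
      have hmul : Filter.Tendsto (fun z : ℂ × ℂ => z.1 * z.2) (nhds 0) (nhds (0:ℂ)) := by
        simpa [Pi.mul_def] using (continuous_fst.mul continuous_snd).tendsto (0 : ℂ × ℂ)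
      -- Step 1 : each level-s germ is a function of the product
      have hstep : ∀ k₁ k₂ : ℕ, ∃ g : ℂ → ℂ, AnalyticAt ℂ g 0 ∧ (k₁ + k₂ = s →
          h k₁ k₂ =ᶠ[nhds (0 : ℂ × ℂ)] fun z => g (z.1*z.2)) := by
        intro k₁ k₂
        by_cases hk : k₁ + k₂ = s
        · have e1 := hφ (k₁+1) k₂ (by omega)
          have e2 := hφ k₁ (k₂+1) (by omega)
          rw [show k₁+1+k₂ = s+1 by omega] at e1
          rw [show k₁+(k₂+1) = s+1 by omega] at e2
          have hnat : (k₁+1) * ((s+1).choose (k₁+1)) = (k₂+1) * ((s+1).choose k₁) := by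
            have h3 : s.choose k₂ = s.choose k₁ := by
              rw [← Nat.choose_symm (by omega : k₁ ≤ s)]
              congr 1
              omega
            have h4 : (s+1).choose (k₂+1) = (s+1).choose k₁ := by
              rw [← Nat.choose_symm (by omega : k₂+1 ≤ s+1)]
              congr 1
              omega
            calc (k₁+1) * ((s+1).choose (k₁+1))
                = (s+1).choose (k₁+1) * (k₁+1) := mul_comm _ _
              _ = (s+1) * s.choose k₁ := (Nat.add_one_mul_choose_eq s k₁).symm
              _ = (s+1) * s.choose k₂ := by rw [h3]
              _ = (s+1).choose (k₂+1) * (k₂+1) := Nat.add_one_mul_choose_eq s k₂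
              _ = (k₂+1) * ((s+1).choose k₁) := by rw [h4]; ring
          have hbin : ((k₁:ℂ)+1) * (((s+1).choose (k₁+1) : ℕ) : ℂ)
              = ((k₂:ℂ)+1) * (((s+1).choose k₁ : ℕ) : ℂ) := by
            have hc := congrArg (Nat.cast : ℕ → ℂ) hnat
            push_cast at hc
            linear_combination hc
          have heq0 : (fun z : ℂ × ℂ => z.1 * deriv (fun w => h k₁ k₂ (w, z.2)) z.1
              - z.2 * deriv (fun w => h k₁ k₂ (z.1, w)) z.2) =ᶠ[nhds (0 : ℂ × ℂ)]
              fun z => (fun _ : ℂ => (0:ℂ)) (z.1 * z.2) := by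
            filter_upwards [hD k₁ k₂, e1, e2] with z hz h1 h2
            have hz' : z.1 * deriv (fun w => h k₁ k₂ (w, z.2)) z.1
                - z.2 * deriv (fun w => h k₁ k₂ (z.1, w)) z.2
                + ((k₁ : ℂ) + 1) * h (k₁ + 1) k₂ z
                - ((k₂ : ℂ) + 1) * h k₁ (k₂ + 1) z = 0 := hz
            have h1' : h (k₁+1) k₂ z = (((s+1).choose (k₁+1) : ℕ) : ℂ)
                * φ (s+1) (z.1*z.2) := h1
            have h2' : h k₁ (k₂+1) z = (((s+1).choose k₁ : ℕ) : ℂ)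
                * φ (s+1) (z.1*z.2) := h2
            show z.1 * deriv (fun w => h k₁ k₂ (w, z.2)) z.1
                - z.2 * deriv (fun w => h k₁ k₂ (z.1, w)) z.2 = 0
            linear_combination hz' - ((k₁:ℂ)+1) * h1' + ((k₂:ℂ)+1) * h2'
              - (φ (s+1) (z.1*z.2)) * hbin
          obtain ⟨-, g, hgan, hgeq⟩ := core_lemma (v := fun _ : ℂ => (0:ℂ)) (han k₁ k₂) heq0
          exact ⟨g, hgan, fun _ => hgeq⟩
        · exact ⟨fun _ => 0, analyticAt_const, fun hk' => absurd hk' hk⟩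
      choose g hgan hgeq using hstep
      -- Step 2 : adjacent relations at level s
      have hadj : ∀ k₁ k₂ : ℕ, k₁ + k₂ + 1 = s →
          (fun y : ℂ => ((k₁:ℂ)+1) * g (k₁+1) k₂ y - ((k₂:ℂ)+1) * g k₁ (k₂+1) y)
            =ᶠ[nhds (0:ℂ)] fun _ => (0:ℂ) := by
        intro k₁ k₂ hk
        have e1 := hgeq (k₁+1) k₂ (by omega)
        have e2 := hgeq k₁ (k₂+1) (by omega)
        have heqv : (fun z : ℂ × ℂ => z.1 * deriv (fun w => h k₁ k₂ (w, z.2)) z.1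
            - z.2 * deriv (fun w => h k₁ k₂ (z.1, w)) z.2) =ᶠ[nhds (0 : ℂ × ℂ)]
            fun z => (fun y : ℂ => ((k₂:ℂ)+1) * g k₁ (k₂+1) y
              - ((k₁:ℂ)+1) * g (k₁+1) k₂ y) (z.1 * z.2) := by
          filter_upwards [hD k₁ k₂, e1, e2] with z hz h1 h2
          have hz' : z.1 * deriv (fun w => h k₁ k₂ (w, z.2)) z.1
              - z.2 * deriv (fun w => h k₁ k₂ (z.1, w)) z.2
              + ((k₁ : ℂ) + 1) * h (k₁ + 1) k₂ z
              - ((k₂ : ℂ) + 1) * h k₁ (k₂ + 1) z = 0 := hz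
          have h1' : h (k₁+1) k₂ z = g (k₁+1) k₂ (z.1*z.2) := h1
          have h2' : h k₁ (k₂+1) z = g k₁ (k₂+1) (z.1*z.2) := h2
          show z.1 * deriv (fun w => h k₁ k₂ (w, z.2)) z.1
              - z.2 * deriv (fun w => h k₁ k₂ (z.1, w)) z.2
              = ((k₂:ℂ)+1) * g k₁ (k₂+1) (z.1*z.2) - ((k₁:ℂ)+1) * g (k₁+1) k₂ (z.1*z.2)
          linear_combination hz' - ((k₁:ℂ)+1) * h1' + ((k₂:ℂ)+1) * h2'
        have hv := (core_lemma (v := fun y : ℂ => ((k₂:ℂ)+1) * g k₁ (k₂+1) y - ((k₁:ℂ)+1) * g (k₁+1) k₂ y) (han k₁ k₂) heqv).1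
        filter_upwards [hv] with y hy
        have hy' : ((k₂:ℂ)+1) * g k₁ (k₂+1) y - ((k₁:ℂ)+1) * g (k₁+1) k₂ y = 0 := hy
        linear_combination -hy'
      -- Step 3 : binomial chain at level s
      have hchain : ∀ k₂ k₁ : ℕ, k₁ + k₂ = s →
          g k₁ k₂ =ᶠ[nhds (0:ℂ)] fun y => ((s.choose k₂ : ℕ) : ℂ) * g s 0 y := by
        intro k₂
        induction k₂ with
        | zero =>
            intro k₁ hk
            have hks : k₁ = s := by omega
            subst hks
            exact Filter.Eventually.of_forall fun y => by simp
        | succ k₂ ih2 =>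
            intro k₁ hk
            have hrel := hadj k₁ k₂ (by omega)
            have hg1 := ih2 (k₁+1) (by omega)
            have hb1 : s.choose (k₂+1) * (k₂+1) = s.choose k₂ * (k₁+1) := by
              have hcs := Nat.choose_succ_right_eq s k₂
              rwa [show s - k₂ = k₁ + 1 by omega] at hcs
            have hbin : ((k₂:ℂ)+1) * ((s.choose (k₂+1) : ℕ) : ℂ)
                = ((k₁:ℂ)+1) * ((s.choose k₂ : ℕ) : ℂ) := by
              have hc := congrArg (Nat.cast : ℕ → ℂ) hb1
              push_cast at hc
              linear_combination hc
            have hk2 : ((k₂:ℂ)+1) ≠ 0 := by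
              have := Nat.cast_add_one_ne_zero (R := ℂ) k₂
              simpa using this
            filter_upwards [hrel, hg1] with y hy h1
            have hy' : ((k₁:ℂ)+1) * g (k₁+1) k₂ y - ((k₂:ℂ)+1) * g k₁ (k₂+1) y = 0 := hy
            have h1' : g (k₁+1) k₂ y = ((s.choose k₂ : ℕ) : ℂ) * g s 0 y := h1
            apply mul_left_cancel₀ hk2
            linear_combination -hy' + ((k₁:ℂ)+1) * h1' - (g s 0 y) * hbin
      -- Step 4 : assemble
      refine ⟨Function.update φ s (g s 0), ?_, ?_⟩
      · intro k
        rcases eq_or_ne k s with hks | hne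
        · rw [hks, Function.update_self]
          exact hgan s 0
        · rw [Function.update_of_ne hne]
          exact hφan k
      · intro k₁ k₂ hk
        rcases eq_or_ne (k₁ + k₂) s with hks | hne
        · have hup : Function.update φ s (g s 0) (k₁+k₂) = g s 0 := by
            rw [hks, Function.update_self]
          rw [hup]
          have hcomp := (hchain k₂ k₁ hks).comp_tendsto hmul
          have hsym : (k₁+k₂).choose k₁ = s.choose k₂ := by
            rw [← hks, ← Nat.choose_symm (by omega : k₁ ≤ k₁ + k₂)]
            congr 1
            omega
          filter_upwards [hgeq k₁ k₂ hks, hcomp] with z h1 h2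
          have h1' : h k₁ k₂ z = g k₁ k₂ (z.1*z.2) := h1
          have h2' : g k₁ k₂ (z.1*z.2) = ((s.choose k₂ : ℕ) : ℂ) * g s 0 (z.1*z.2) := h2
          rw [h1', h2', hsym]
        · have hup : Function.update φ s (g s 0) (k₁+k₂) = φ (k₁+k₂) := by
            rw [Function.update_of_ne hne]
          rw [hup]
          exact hφ k₁ k₂ (by omega)
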